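/- Let ω ∈ ℝ and let (ψ,v) ∈ H¹(ℝ)×H¹(ℝ) be a (classical) solution of the traveling-wave system −ω(ψ − bψ'') + v + a v'' + ψ v^p = 0, ω(−v + b v'') + ψ + c ψ'' + (1/(p+1)) v^{p+1} = 0 on ℝ. Then the following identities hold: J_ω(ψ,v) = (p/(p+2))·I_ω(ψ,v), J_ω(ψ,v) = −(p/2)·G(ψ,v), and I_ω(ψ,v) = −((p+2)/2)·G(ψ,v), where J_ω = I_ω + G. -/

import Mathlib

open MeasureTheory Real Filter Topology Set

noncomputable section

/-- `f` belongs to `H¹(ℝ)`: differentiable with `f, f' ∈ L²(ℝ)`. -/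
def InH1 (f : ℝ → ℝ) : Prop :=
  Differentiable ℝ f ∧ MemLp f 2 (volume : Measure ℝ) ∧
    MemLp (deriv f) 2 (volume : Measure ℝ)

/-- Square of the `X = H¹ × H¹` norm. -/
def XnormSq (ψ v : ℝ → ℝ) : ℝ :=
  ∫ x : ℝ, (ψ x ^ 2 + deriv ψ x ^ 2 + v x ^ 2 + deriv v x ^ 2)

/-- Distance in `X`. -/
def Xdist (f g : (ℝ → ℝ) × (ℝ → ℝ)) : ℝ :=
  Real.sqrt (XnormSq (fun x => f.1 x - g.1 x) (fun x => f.2 x - g.2 x))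

/-- Sign-preserving (odd) real power, modelling `x^q` for rationals `q` with odd
numerator and denominator. -/
def opow (x q : ℝ) : ℝ := Real.sign x * |x| ^ q

def I1fun (a c : ℝ) (ψ v : ℝ → ℝ) : ℝ :=
  ∫ x : ℝ, (ψ x ^ 2 - c * deriv ψ x ^ 2 + v x ^ 2 - a * deriv v x ^ 2)

def I2fun (b ω : ℝ) (ψ v : ℝ → ℝ) : ℝ :=
  -2 * ω * ∫ x : ℝ, (ψ x * v x + b * deriv ψ x * deriv v x)

def Ifun (a b c ω : ℝ) (ψ v : ℝ → ℝ) : ℝ := I1fun a c ψ v + I2fun b ω ψ v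

/-- `G(ψ,v) = (2/(p+1)) ∫ ψ v^{p+1}`; since `p = p₁/p₂` with `p₁, p₂` odd, the
exponent `p+1` has even numerator and odd denominator, so `v^{p+1} = |v|^{p+1}`. -/
def Gfun (p : ℝ) (ψ v : ℝ → ℝ) : ℝ :=
  (2 / (p + 1)) * ∫ x : ℝ, ψ x * |v x| ^ (p + 1)

/-- Constrained infimum `𝓘_ω`. -/
def Iinf (a b c ω p : ℝ) : ℝ :=
  sInf {r : ℝ | ∃ ψ v : ℝ → ℝ, InH1 ψ ∧ InH1 v ∧ Gfun p ψ v = -1 ∧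
    r = Ifun a b c ω ψ v}

/-- `𝓖_ω`: the set of minimizers of `I_ω` subject to `G = -1`. -/
def Gset (a b c ω p : ℝ) : Set ((ℝ → ℝ) × (ℝ → ℝ)) :=
  {pv | InH1 pv.1 ∧ InH1 pv.2 ∧ Gfun p pv.1 pv.2 = -1 ∧
    Ifun a b c ω pv.1 pv.2 = Iinf a b c ω p}

/-- `𝓖̃_ω = ((2/(p+2)) 𝓘_ω)^{1/p} · 𝓖_ω`. -/
def Gtilde (a b c ω p : ℝ) : Set ((ℝ → ℝ) × (ℝ → ℝ)) :=
  {qw | ∃ pv ∈ Gset a b c ω p,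
    qw = (fun x => ((2 / (p + 2)) * Iinf a b c ω p) ^ (1 / p) * pv.1 x,
          fun x => ((2 / (p + 2)) * Iinf a b c ω p) ^ (1 / p) * pv.2 x)}

/-- The traveling-wave system `-ω(ψ - bψ'') + v + a v'' + ψ v^p = 0`,
`ω(-v + b v'') + ψ + c ψ'' + (1/(p+1)) v^{p+1} = 0`, for `(ψ,v) ∈ H¹ × H¹`
classical (twice continuously differentiable) solutions. -/
def TravelingWave (a b c ω p : ℝ) (ψ v : ℝ → ℝ) : Prop :=
  InH1 ψ ∧ InH1 v ∧ ContDiff ℝ 2 ψ ∧ ContDiff ℝ 2 v ∧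
  (∀ x : ℝ, -ω * (ψ x - b * iteratedDeriv 2 ψ x) + v x + a * iteratedDeriv 2 v x
      + ψ x * opow (v x) p = 0) ∧
  (∀ x : ℝ, ω * (-(v x) + b * iteratedDeriv 2 v x) + ψ x + c * iteratedDeriv 2 ψ x
      + (1 / (p + 1)) * |v x| ^ (p + 1) = 0)

/-- The Hamiltonian `𝓗`. -/
def Ham (a c p : ℝ) (η u : ℝ → ℝ) : ℝ :=
  (1 / 2) * ∫ x : ℝ, (η x ^ 2 - c * deriv η x ^ 2 + u x ^ 2 - a * deriv u x ^ 2
      + (2 / (p + 1)) * η x * |u x| ^ (p + 1))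

/-- The charge `𝓠`. -/
def charge (b : ℝ) (η u : ℝ → ℝ) : ℝ :=
  -∫ x : ℝ, (η x * u x + b * deriv η x * deriv u x)

/-- The scalar function `d(ω)`. -/
def dfun (a b c p : ℝ) (ω : ℝ) : ℝ :=
  (p / (2 * (p + 2))) * (2 / (p + 2)) ^ ((2 : ℝ) / p) *
    (Iinf a b c ω p) ^ ((p + 2) / p)

/-- `ω(ε) = √(1 - ε^{2/(p+1)})`. -/
def omEps (p ε : ℝ) : ℝ := Real.sqrt (1 - ε ^ ((2 : ℝ) / (p + 1)))

def I1eps (a c p ε : ℝ) (z w : ℝ → ℝ) : ℝ :=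
  ∫ y : ℝ, (ε ^ (-(2 : ℝ) / (p + 1)) * z y ^ 2 - c * deriv z y ^ 2
    + ε ^ (-(2 : ℝ) / (p + 1)) * w y ^ 2 - a * deriv w y ^ 2)

def I2eps (b p ε ω : ℝ) (z w : ℝ → ℝ) : ℝ :=
  -2 * ω * ∫ y : ℝ, (ε ^ (-(2 : ℝ) / (p + 1)) * z y * w y + b * deriv z y * deriv w y)

/-- Rescaled functional `I^ε` (with `ω = ω(ε)`). -/
def Ieps (a b c p ε : ℝ) (z w : ℝ → ℝ) : ℝ :=
  I1eps a c p ε z w + I2eps b p ε (omEps p ε) z w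

def IinfEps (a b c p ε : ℝ) : ℝ :=
  sInf {r : ℝ | ∃ z w : ℝ → ℝ, InH1 z ∧ InH1 w ∧ Gfun p z w = -1 ∧
    r = Ieps a b c p ε z w}

def Jeps (a b c p ε : ℝ) (w : ℝ → ℝ) : ℝ :=
  (∫ y : ℝ, ε ^ (-(2 : ℝ) / (p + 1)) * (1 - omEps p ε ^ 2) * w y ^ 2)
    + ∫ y : ℝ, -((2 * b + c) * omEps p ε ^ 2 + a) * deriv w y ^ 2

def Keps (p ε : ℝ) (w : ℝ → ℝ) : ℝ := Gfun p (fun x => omEps p ε * w x) w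

def JinfEps (a b c p ε : ℝ) : ℝ :=
  sInf {r : ℝ | ∃ w : ℝ → ℝ, InH1 w ∧ Keps p ε w = -1 ∧ r = Jeps a b c p ε w}

def J0fun (σ : ℝ) (w : ℝ → ℝ) : ℝ :=
  ∫ y : ℝ, (w y ^ 2 + (σ - 1 / 3) * deriv w y ^ 2)

/-- `K⁰(w) = (2/(p+1)) ∫ w^{p+2}`; the exponent `p+2` has odd numerator and
odd denominator, so `w^{p+2}` is the sign-preserving power. -/
def K0fun (p : ℝ) (w : ℝ → ℝ) : ℝ :=
  (2 / (p + 1)) * ∫ y : ℝ, opow (w y) (p + 2)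

def Jinf0 (σ p : ℝ) : ℝ :=
  sInf {r : ℝ | ∃ w : ℝ → ℝ, InH1 w ∧ K0fun p w = -1 ∧ r = J0fun σ w}

/-- The Beta function `B(x,y) = ∫₀¹ t^{x-1}(1-t)^{y-1} dt`. -/
def betaFn (x y : ℝ) : ℝ := ∫ t in (0 : ℝ)..1, t ^ (x - 1) * (1 - t) ^ (y - 1)

private lemma opow_mul_self' {t q : ℝ} (hq : 0 < q) : t * opow t q = |t| ^ (q + 1) := by
  unfold opow
  rcases lt_trichotomy t 0 with h | h | h
  · rw [Real.sign_of_neg h, abs_of_neg h, Real.rpow_add (by linarith), Real.rpow_one]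
    ring
  · simp [h, Real.sign_zero, Real.zero_rpow (by positivity : q + 1 ≠ 0)]
  · rw [Real.sign_of_pos h, abs_of_pos h, Real.rpow_add h, Real.rpow_one]
    ring

private lemma integrable_mul_L2 {f g : ℝ → ℝ} (hf : MemLp f 2 (volume : Measure ℝ))
    (hg : MemLp g 2 (volume : Measure ℝ))
    (hm : AEStronglyMeasurable (fun x => f x * g x) volume) :
    Integrable (fun x => f x * g x) := by
  refine ((hf.integrable_sq.add hg.integrable_sq).div_const 2).mono' hm ?_
  filter_upwards with x
  simp only [Pi.add_apply]
  rw [Real.norm_eq_abs, abs_le]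
  constructor <;> nlinarith [sq_nonneg (f x - g x), sq_nonneg (f x + g x)]

/-- Identities satisfied by solutions of the traveling-wave
system, where `J_ω = I_ω + G`. -/
theorem traveling_wave_identities
    (a b c ω p : ℝ) (p₁ p₂ : ℕ)
    (ha : a < 0) (hb : 0 < b) (hc : c < 0)
    (hp₁ : Odd p₁) (hp₂ : Odd p₂) (hcop : Nat.Coprime p₁ p₂)
    (hpval : p = (p₁ : ℝ) / (p₂ : ℝ)) (hppos : 0 < p)
    (ψ v : ℝ → ℝ) (hwave : TravelingWave a b c ω p ψ v) :
    Ifun a b c ω ψ v + Gfun p ψ v = (p / (p + 2)) * Ifun a b c ω ψ v ∧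
    Ifun a b c ω ψ v + Gfun p ψ v = -(p / 2) * Gfun p ψ v ∧
    Ifun a b c ω ψ v = -((p + 2) / 2) * Gfun p ψ v := by
  obtain ⟨hψH, hvH, hψc, hvc, heq1, heq2⟩ := hwave
  have hp1 : p + 1 ≠ 0 := by positivity
  have hp2 : p + 2 ≠ 0 := by positivity
  -- differentiability and continuity facts
  have hψd : Differentiable ℝ ψ := hψH.1
  have hvd : Differentiable ℝ v := hvH.1
  have hψ1 : ContDiff ℝ 1 (deriv ψ) := by
    have h2 : ContDiff ℝ ((1 : WithTop ℕ∞) + 1) ψ := by norm_num; exact hψc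
    exact (contDiff_succ_iff_deriv.mp h2).2.2
  have hv1 : ContDiff ℝ 1 (deriv v) := by
    have h2 : ContDiff ℝ ((1 : WithTop ℕ∞) + 1) v := by norm_num; exact hvc
    exact (contDiff_succ_iff_deriv.mp h2).2.2
  have hψ'd : Differentiable ℝ (deriv ψ) := hψ1.differentiable one_ne_zero
  have hv'd : Differentiable ℝ (deriv v) := hv1.differentiable one_ne_zero
  have hψcont : Continuous ψ := hψd.continuous
  have hvcont : Continuous v := hvd.continuous
  have hψ'cont : Continuous (deriv ψ) := hψ'd.continuous
  have hv'cont : Continuous (deriv v) := hv'd.continuous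
  have hvp1cont : Continuous (fun x => |v x| ^ (p + 1)) :=
    (hvcont.abs).rpow_const (fun x => Or.inr (by positivity))
  have hit : ∀ f : ℝ → ℝ, iteratedDeriv 2 f = deriv (deriv f) := by
    intro f; rw [iteratedDeriv_succ, iteratedDeriv_one]
  -- integrability of quadratic pieces
  have hψ2 : Integrable (fun x => ψ x ^ 2) := hψH.2.1.integrable_sq
  have hψ'2 : Integrable (fun x => deriv ψ x ^ 2) := hψH.2.2.integrable_sq
  have hv2 : Integrable (fun x => v x ^ 2) := hvH.2.1.integrable_sq
  have hv'2 : Integrable (fun x => deriv v x ^ 2) := hvH.2.2.integrable_sq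
  have hψv : Integrable (fun x => ψ x * v x) :=
    integrable_mul_L2 hψH.2.1 hvH.2.1 (hψcont.mul hvcont).aestronglyMeasurable
  have hψ'v' : Integrable (fun x => deriv ψ x * deriv v x) :=
    integrable_mul_L2 hψH.2.2 hvH.2.2 (hψ'cont.mul hv'cont).aestronglyMeasurable
  have hψ'v : Integrable (fun x => deriv ψ x * v x) :=
    integrable_mul_L2 hψH.2.2 hvH.2.1 (hψ'cont.mul hvcont).aestronglyMeasurable
  have hψv' : Integrable (fun x => ψ x * deriv v x) :=
    integrable_mul_L2 hψH.2.1 hvH.2.2 (hψcont.mul hv'cont).aestronglyMeasurable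
  have hvv' : Integrable (fun x => v x * deriv v x) :=
    integrable_mul_L2 hvH.2.1 hvH.2.2 (hvcont.mul hv'cont).aestronglyMeasurable
  have hψψ' : Integrable (fun x => ψ x * deriv ψ x) :=
    integrable_mul_L2 hψH.2.1 hψH.2.2 (hψcont.mul hψ'cont).aestronglyMeasurable
  -- boundedness of v
  obtain ⟨M, hM0, hM⟩ : ∃ M : ℝ, 0 ≤ M ∧ ∀ x, |v x| ≤ M := by
    have hgint : Integrable (fun t => (2 : ℝ) * (v t * deriv v t)) := hvv'.const_mul 2
    have hderiv : ∀ t : ℝ, HasDerivAt (fun y => v y ^ 2) (2 * (v t * deriv v t)) t := by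
      intro t
      have h := (hvd t).hasDerivAt.mul (hvd t).hasDerivAt
      have hf : (fun y => v y ^ 2) = fun y => v y * v y := by funext y; ring
      rw [hf]
      exact h.congr_deriv (by ring)
    set C : ℝ := ∫ t : ℝ, ‖(2 : ℝ) * (v t * deriv v t)‖ with dC
    have hbound : ∀ x : ℝ, v x ^ 2 ≤ v 0 ^ 2 + C := by
      intro x
      have hftc : ∫ t in (0:ℝ)..x, (2:ℝ) * (v t * deriv v t) = v x ^ 2 - v 0 ^ 2 :=
        intervalIntegral.integral_eq_sub_of_hasDerivAt
          (fun t _ => hderiv t)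
          ((continuous_const.mul (hvcont.mul hv'cont)).intervalIntegrable _ _)
      have h2 : |v x ^ 2 - v 0 ^ 2| ≤ C := by
        rw [← hftc, ← Real.norm_eq_abs]
        refine (intervalIntegral.norm_integral_le_integral_norm_uIoc).trans ?_
        exact setIntegral_le_integral hgint.norm
          (Filter.Eventually.of_forall fun t => norm_nonneg _)
      have := abs_le.mp h2
      linarith [this.2]
    refine ⟨Real.sqrt (v 0 ^ 2 + C), Real.sqrt_nonneg _, fun x => ?_⟩
    calc |v x| = Real.sqrt (v x ^ 2) := (Real.sqrt_sq_eq_abs _).symm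
    _ ≤ _ := Real.sqrt_le_sqrt (hbound x)
  -- integrability of the nonlinear piece
  have hgG : Integrable (fun x => ψ x * |v x| ^ (p + 1)) := by
    refine (hψv.abs.const_mul (M ^ p)).mono'
      ((hψcont.mul hvp1cont).aestronglyMeasurable) ?_
    filter_upwards with x
    rw [Real.norm_eq_abs, abs_mul,
      abs_of_nonneg (Real.rpow_nonneg (abs_nonneg (v x)) _)]
    have h1 : |v x| ^ (p + 1) ≤ M ^ p * |v x| := by
      rcases eq_or_ne (v x) 0 with h | h
      · simp [h, Real.zero_rpow hp1]
      · have hpos : 0 < |v x| := abs_pos.mpr h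
        rw [Real.rpow_add hpos, Real.rpow_one]
        exact mul_le_mul_of_nonneg_right
          (Real.rpow_le_rpow (abs_nonneg (v x)) (hM x) hppos.le) (abs_nonneg _)
    calc |ψ x| * |v x| ^ (p + 1) ≤ |ψ x| * (M ^ p * |v x|) :=
          mul_le_mul_of_nonneg_left h1 (abs_nonneg _)
    _ = M ^ p * |ψ x * v x| := by rw [abs_mul]; ring
  -- the pieces of the identity
  set i1 : ℝ → ℝ := fun x => ψ x ^ 2 - c * deriv ψ x ^ 2 + v x ^ 2 - a * deriv v x ^ 2
    with di1
  set j : ℝ → ℝ := fun x => ψ x * v x + b * (deriv ψ x * deriv v x) with dj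
  set g : ℝ → ℝ := fun x => ψ x * |v x| ^ (p + 1) with dg
  set L : ℝ → ℝ := fun x => i1 x + (-2 * ω) * j x + ((p + 2) / (p + 1)) * g x with dL
  set W : ℝ → ℝ := fun x =>
    ω * b * (deriv ψ x * v x + ψ x * deriv v x) + a * (v x * deriv v x)
      + c * (ψ x * deriv ψ x) with dW
  have hi1int : Integrable i1 := ((hψ2.sub (hψ'2.const_mul c)).add hv2).sub (hv'2.const_mul a)
  have hjint : Integrable j := hψv.add (hψ'v'.const_mul b)
  have hLint : Integrable L := (hi1int.add (hjint.const_mul _)).add (hgG.const_mul _)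
  have hWint : Integrable W :=
    (((hψ'v.add hψv').const_mul (ω * b)).add (hvv'.const_mul a)).add (hψψ'.const_mul c)
  have hLcont : Continuous L := by
    rw [dL, di1, dj, dg]
    apply Continuous.add
    apply Continuous.add
    · exact (((hψcont.pow 2).sub (continuous_const.mul (hψ'cont.pow 2))).add
        (hvcont.pow 2)).sub (continuous_const.mul (hv'cont.pow 2))
    · exact continuous_const.mul ((hψcont.mul hvcont).add
        (continuous_const.mul (hψ'cont.mul hv'cont)))
    · exact continuous_const.mul (hψcont.mul hvp1cont)
  -- the key pointwise identity : W' = -L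
  have hkey : ∀ x : ℝ, HasDerivAt W (-(L x)) x := by
    intro x
    have hdW : HasDerivAt W
        (ω * b * ((deriv (deriv ψ) x * v x + deriv ψ x * deriv v x)
            + (deriv ψ x * deriv v x + ψ x * deriv (deriv v) x))
          + a * (deriv v x * deriv v x + v x * deriv (deriv v) x)
          + c * (deriv ψ x * deriv ψ x + ψ x * deriv (deriv ψ) x)) x := by
      exact (((((hψ'd x).hasDerivAt.mul (hvd x).hasDerivAt).add
        ((hψd x).hasDerivAt.mul (hv'd x).hasDerivAt)).const_mul (ω * b)).add
        (((hvd x).hasDerivAt.mul (hv'd x).hasDerivAt).const_mul a)).add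
        (((hψd x).hasDerivAt.mul (hψ'd x).hasDerivAt).const_mul c)
    have e1 := heq1 x
    have e2 := heq2 x
    rw [hit ψ, hit v] at e1 e2
    have hop : v x * opow (v x) p = |v x| ^ (p + 1) := opow_mul_self' hppos
    have e2c : |v x| ^ (p + 1)
        = -((p + 1) * (ω * (-(v x) + b * deriv (deriv v) x) + ψ x
            + c * deriv (deriv ψ) x)) := by
      have h : (1 / (p + 1)) * |v x| ^ (p + 1)
          = -(ω * (-(v x) + b * deriv (deriv v) x) + ψ x + c * deriv (deriv ψ) x) := by
        linarith
      calc |v x| ^ (p + 1) = (p + 1) * ((1 / (p + 1)) * |v x| ^ (p + 1)) := by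
            field_simp
      _ = _ := by rw [h]; ring
    have hkA : ((p + 2) / (p + 1)) * |v x| ^ (p + 1)
        = -((p + 2) * (ω * (-(v x) + b * deriv (deriv v) x) + ψ x
            + c * deriv (deriv ψ) x)) := by
      rw [e2c]; field_simp
    have hfin : ω * b * ((deriv (deriv ψ) x * v x + deriv ψ x * deriv v x)
            + (deriv ψ x * deriv v x + ψ x * deriv (deriv v) x))
          + a * (deriv v x * deriv v x + v x * deriv (deriv v) x)
          + c * (deriv ψ x * deriv ψ x + ψ x * deriv (deriv ψ) x) = -(L x) := by
      simp only [dL, di1, dj, dg]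
      linear_combination (v x) * e1 + (-(ψ x)) * hop + (ψ x) * hkA + (-(ψ x)) * e2c
    rw [← hfin]
    exact hdW
  -- integration over [-R, R]
  have hFTC : ∀ R : ℝ, ∫ x in (-R)..R, L x = W (-R) - W R := by
    intro R
    have h := intervalIntegral.integral_eq_sub_of_hasDerivAt
      (f := W) (f' := fun x => -(L x)) (a := -R) (b := R) (fun x _ => hkey x)
      ((hLcont.neg).intervalIntegrable _ _)
    have h2 : ∫ x in (-R)..R, -(L x) = -∫ x in (-R)..R, L x :=
      intervalIntegral.integral_neg
    rw [h2] at h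
    linarith
  have hT : Tendsto (fun R : ℝ => W (-R) - W R) atTop (𝓝 (∫ x, L x)) := by
    have h := intervalIntegral_tendsto_integral hLint tendsto_neg_atTop_atBot tendsto_id
    exact Filter.Tendsto.congr (fun R => hFTC R) h
  -- the integral of L vanishes
  have hS : ∫ x, L x = 0 := by
    by_contra hS0
    set S := ∫ x, L x with dS
    have hev : ∀ᶠ R in (atTop : Filter ℝ), |S| / 2 ≤ |W (-R)| + |W R| := by
      have h1 := Metric.tendsto_nhds.mp hT (|S| / 2) (by positivity)
      filter_upwards [h1] with R hR
      rw [Real.dist_eq, abs_sub_comm] at hR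
      have t1 := abs_sub_abs_le_abs_sub S (W (-R) - W R)
      have t2 : |W (-R) - W R| ≤ |W (-R)| + |W R| := by
        rw [sub_eq_add_neg]
        exact (abs_add_le _ _).trans (by rw [abs_neg])
      linarith
    obtain ⟨N, hN⟩ := eventually_atTop.mp hev
    have hWneg : Integrable (fun R : ℝ => W (-R)) := by
      have := (memLp_one_iff_integrable.mpr hWint).comp_measurePreserving
        (Measure.measurePreserving_neg (volume : Measure ℝ))
      exact memLp_one_iff_integrable.mp this
    have hconst : IntegrableOn (fun _ : ℝ => |S| / 2) (Ioi N) := by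
      refine Integrable.mono' ((hWneg.abs.add hWint.abs).integrableOn)
        aestronglyMeasurable_const ?_
      filter_upwards [ae_restrict_mem measurableSet_Ioi] with R hR
      rw [Real.norm_eq_abs, abs_of_nonneg (by positivity)]
      exact hN R hR.le
    rw [integrableOn_const_iff] at hconst
    rcases hconst with h | h
    · have : |S| = 0 := by rw [enorm_eq_zero] at h; linarith
      exact hS0 (abs_eq_zero.mp this)
    · rw [Real.volume_Ioi] at h
      exact (lt_irrefl _ h)
  -- split the integral
  have hadd1 : Integrable (fun x => i1 x + (-2 * ω) * j x) := hi1int.add (hjint.const_mul _)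
  have hadd2 : Integrable (fun x => ((p + 2) / (p + 1)) * g x) := hgG.const_mul _
  have hsplit : (∫ x, i1 x) + ((-2 * ω) * ∫ x, j x)
      + (((p + 2) / (p + 1)) * ∫ x, g x) = 0 := by
    have h0 : ∫ x, (i1 x + (-2 * ω) * j x + ((p + 2) / (p + 1)) * g x) = 0 := hS
    have h1 : ∫ x, (i1 x + (-2 * ω) * j x + ((p + 2) / (p + 1)) * g x)
        = (∫ x, (i1 x + (-2 * ω) * j x)) + ∫ x, ((p + 2) / (p + 1)) * g x :=
      integral_add hadd1 hadd2
    have h2 : ∫ x, (i1 x + (-2 * ω) * j x) = (∫ x, i1 x) + ∫ x, (-2 * ω) * j x :=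
      integral_add hi1int (hjint.const_mul _)
    have h3 : ∫ x, (-2 * ω) * j x = (-2 * ω) * ∫ x, j x := integral_const_mul _ _
    have h4 : ∫ x, ((p + 2) / (p + 1)) * g x = ((p + 2) / (p + 1)) * ∫ x, g x :=
      integral_const_mul _ _
    linarith
  have hKey : Ifun a b c ω ψ v = -((p + 2) / 2) * Gfun p ψ v := by
    have e1 : I1fun a c ψ v = ∫ x, i1 x := by simp only [I1fun, di1]
    have e2 : I2fun b ω ψ v = (-2 * ω) * ∫ x, j x := by
      simp only [I2fun, dj]
      have h : (fun x => ψ x * v x + b * deriv ψ x * deriv v x)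
          = fun x => ψ x * v x + b * (deriv ψ x * deriv v x) := by
        funext x; ring
      rw [h]
    have e3 : Gfun p ψ v = (2 / (p + 1)) * ∫ x, g x := by simp only [Gfun, dg]
    simp only [Ifun, e1, e2, e3]
    linear_combination hsplit
  refine ⟨?_, ?_, hKey⟩
  · rw [hKey]; field_simp; ring
  · rw [hKey]; ring


end
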